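/- Let R = ℤ/4ℤ and let y = x·(-x + 1). The center of the group G(R) of automorphisms of R[x] is exactly the set of automorphisms α_f with α_f(x) = x + f, where f ranges over the nilpotent elements of R[x] that belong to the subalgebra R[y]. -/

import Mathlib

open Polynomial

private noncomputable def phi4 : ZMod 4 →+* ZMod 2 :=
  ZMod.castHom (show 2 ∣ 4 by norm_num) (ZMod 2)

private lemma phi4_apply (u : ZMod 4) : phi4 u = ((u.val : ℕ) : ZMod 2) := by
  rw [phi4, ZMod.castHom_apply, ZMod.natCast_val]

private lemma C2 : (2 : (ZMod 4)[X]) = C 2 := by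
  rw [← Nat.cast_ofNat (R := (ZMod 4)[X]), ← C_eq_natCast, Nat.cast_ofNat]

private lemma two_mul_iff (a b : (ZMod 4)[X]) :
    C 2 * a = C 2 * b ↔ a.map phi4 = b.map phi4 := by
  rw [Polynomial.ext_iff, Polynomial.ext_iff]
  apply forall_congr'
  intro n
  rw [coeff_C_mul, coeff_C_mul, coeff_map, coeff_map, phi4_apply, phi4_apply]
  exact (by decide : ∀ u v : ZMod 4,
    2 * u = 2 * v ↔ ((u.val : ℕ) : ZMod 2) = ((v.val : ℕ) : ZMod 2)) _ _

private lemma comp_X_struct {t u : (ZMod 2)[X]} (h : u.comp t = X) :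
    ∃ b : ZMod 2, t = X + C b := by
  have hd : u.natDegree * t.natDegree = 1 := by rw [← natDegree_comp, h, natDegree_X]
  have ht : t.natDegree = 1 := Nat.eq_one_of_mul_eq_one_left hd
  have h1 : t = C (t.coeff 1) * X + C (t.coeff 0) := eq_X_add_C_of_natDegree_le_one ht.le
  have hne : t.coeff 1 ≠ 0 := by
    have ht0 : t ≠ 0 := fun h0 => by simp [h0] at ht
    rw [show (1:ℕ) = t.natDegree from ht.symm]
    exact mt leadingCoeff_eq_zero.mp ht0
  have hc1 : t.coeff 1 = 1 := (by decide : ∀ c : ZMod 2, c ≠ 0 → c = 1) _ hne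
  exact ⟨t.coeff 0, by nth_rewrite 1 [h1]; rw [hc1, C_1, one_mul]⟩

private lemma two_poly_zero : (2 : (ZMod 2)[X]) = 0 := by
  rw [← Nat.cast_ofNat (R := (ZMod 2)[X]), ← C_eq_natCast]
  rw [show ((2:ℕ) : ZMod 2) = 0 by decide, C_0]

private lemma w_comp_invariant (b : ZMod 2) :
    (X^2 + X : (ZMod 2)[X]).comp (X + C b) = X^2 + X := by
  have hball : ∀ c : ZMod 2, c = 0 ∨ c = 1 := by decide
  have h2 := two_poly_zero
  rcases hball b with rfl | rfl
  · simp
  · simp only [add_comp, pow_comp, X_comp, C_1]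
    linear_combination (X + (1 : (ZMod 2)[X])) * h2

private lemma w_degree : (X^2 + X : (ZMod 2)[X]).degree = 2 := by
  rw [degree_add_eq_left_of_degree_lt (by rw [degree_X, degree_X_pow]; exact_mod_cast one_lt_two)]
  rw [degree_X_pow]
  rfl

private lemma w_monic : (X^2 + X : (ZMod 2)[X]).Monic :=
  monic_X_pow_add (by rw [degree_X]; exact_mod_cast one_lt_two)

private lemma w_natDegree : (X^2 + X : (ZMod 2)[X]).natDegree = 2 :=
  natDegree_eq_of_degree_eq_some w_degree

private lemma w_ne_one : (X^2 + X : (ZMod 2)[X]) ≠ 1 := by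
  intro h
  have h2 := congrArg (fun p : (ZMod 2)[X] => p.coeff 2) h
  simp [coeff_one, coeff_X] at h2

private lemma w_ne_C (c : ZMod 2) : (X^2 + X : (ZMod 2)[X]) ≠ C c := by
  intro h
  have h2 := congrArg (fun p : (ZMod 2)[X] => p.coeff 2) h
  simp [coeff_C, coeff_X] at h2

private lemma decomp (p : (ZMod 2)[X]) :
    ∃ q₀ q₁ : (ZMod 2)[X], p = q₀.comp (X^2+X) + X * q₁.comp (X^2+X) := by
  by_cases h1 : p.natDegree ≤ 1
  · refine ⟨C (p.coeff 0), C (p.coeff 1), ?_⟩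
    rw [C_comp, C_comp]
    nth_rewrite 1 [eq_X_add_C_of_natDegree_le_one h1]
    ring
  · push_neg at h1
    have hp0 : p ≠ 0 := fun h0 => by simp [h0] at h1
    have hdlt : (p /ₘ (X^2+X)).natDegree < p.natDegree := by
      by_cases hq0 : p /ₘ (X^2+X) = 0
      · rw [hq0, natDegree_zero]; omega
      · exact natDegree_lt_natDegree hq0
          (degree_divByMonic_lt p (X^2+X) hp0 (by rw [w_degree]; exact_mod_cast two_pos))
    obtain ⟨q₀, q₁, hq⟩ := decomp (p /ₘ (X^2+X))
    have hrlt : (p %ₘ (X^2+X)).natDegree ≤ 1 := by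
      have h2 := natDegree_modByMonic_lt p w_monic w_ne_one
      rw [w_natDegree] at h2; omega
    refine ⟨X * q₀ + C ((p %ₘ (X^2+X)).coeff 0), X * q₁ + C ((p %ₘ (X^2+X)).coeff 1), ?_⟩
    have hrem := eq_X_add_C_of_natDegree_le_one hrlt
    conv_lhs => rw [← modByMonic_add_div p (X^2+X)]
    rw [hq]
    nth_rewrite 1 [hrem]
    simp only [add_comp, mul_comp, X_comp, C_comp]
    ring
termination_by p.natDegree

private lemma invariant_comp {p : (ZMod 2)[X]} (h : p.comp (X + C 1) = p) :
    ∃ q : (ZMod 2)[X], p = q.comp (X^2+X) := by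
  obtain ⟨q₀, q₁, rfl⟩ := decomp p
  rw [add_comp, mul_comp, X_comp, comp_assoc, comp_assoc, w_comp_invariant 1, C_1] at h
  have hz : q₁.comp (X^2+X) = 0 := by linear_combination h
  rcases comp_eq_zero_iff.mp hz with h0 | ⟨-, hC⟩
  · exact ⟨q₀, by rw [h0, zero_comp]; ring⟩
  · exact absurd hC (w_ne_C _)

private lemma pow_add_sq_zero {f : (ZMod 4)[X]} (hf : f * f = 0) (n : ℕ) :
    (X + f)^n = X^n + (n : (ZMod 4)[X]) * X^(n-1) * f := by
  induction n with
  | zero => simp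
  | succ m ih =>
    cases m with
    | zero => simp
    | succ k =>
      rw [pow_succ, ih]
      push_cast
      linear_combination (((k:(ZMod 4)[X]) + 1) * X^k) * hf

private lemma taylor2 {f : (ZMod 4)[X]} (hf : f * f = 0) (t : (ZMod 4)[X]) :
    t.comp (X + f) = t + derivative t * f := by
  induction t using Polynomial.induction_on' with
  | add p q hp hq =>
    rw [add_comp, hp, hq, derivative_add]; ring
  | monomial n a =>
    rw [← C_mul_X_pow_eq_monomial, mul_comp, C_comp, pow_comp, X_comp,
      pow_add_sq_zero hf, derivative_C_mul_X_pow]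
    rw [C_mul, C_eq_natCast]
    ring

private lemma equiv_apply (e : (ZMod 4)[X] ≃ₐ[ZMod 4] (ZMod 4)[X]) (p : (ZMod 4)[X]) :
    e p = p.comp (e X) := by
  have h : (e : (ZMod 4)[X] →ₐ[ZMod 4] (ZMod 4)[X]) = aeval (e X) :=
    Polynomial.algHom_ext (by simp)
  have h2 := DFunLike.congr_fun h p
  simpa [comp_eq_aeval] using h2

private lemma map_y : (X * (-X + 1) : (ZMod 4)[X]).map phi4 = X^2 + X := by
  have h2 := two_poly_zero
  simp only [Polynomial.map_mul, Polynomial.map_add, Polynomial.map_neg, map_X,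
    Polynomial.map_one]
  linear_combination (-(X:(ZMod 2)[X])^2) * h2

private lemma red_struct (τ : (ZMod 4)[X] ≃ₐ[ZMod 4] (ZMod 4)[X]) :
    ∃ b : ZMod 2, (τ X).map phi4 = X + C b := by
  have hu : (τ.symm X).comp (τ X) = X := by
    rw [← equiv_apply τ (τ.symm X), AlgEquiv.apply_symm_apply]
  have h2 : ((τ.symm X).map phi4).comp ((τ X).map phi4) = X := by
    rw [← Polynomial.map_comp, hu, map_X]
  exact comp_X_struct h2

private lemma dvd_two_of_map_zero {p : (ZMod 4)[X]} (h : p.map phi4 = 0) :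
    ∃ g, p = C 2 * g := by
  have h1 : ∀ i, (2 : ZMod 4) ∣ p.coeff i := by
    intro i
    have hi : ((p.coeff i).val : ZMod 2) = 0 := by
      have h2 := congrArg (fun q : (ZMod 2)[X] => q.coeff i) h
      simp only [coeff_map, coeff_zero] at h2
      rwa [phi4_apply] at h2
    exact ⟨(((p.coeff i).val / 2 : ℕ) : ZMod 4),
      ((by decide : ∀ c : ZMod 4, ((c.val : ℕ) : ZMod 2) = 0 →
        c = 2 * ((c.val / 2 : ℕ) : ZMod 4)) _ hi)⟩
  exact (C_dvd_iff_dvd_coeff 2 p).mpr h1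

private lemma sq_two_mul_zero (g : (ZMod 4)[X]) : (C 2 * g) * (C 2 * g) = 0 := by
  calc C 2 * g * (C 2 * g) = C (2*2) * (g*g) := by rw [C_mul]; ring
  _ = 0 := by rw [show (2*2 : ZMod 4) = 0 by decide, C_0, zero_mul]


/-- Theorem: over `R = ℤ/4ℤ`, the center of the group `G(R)` of automorphisms of `R[x]`
consists exactly of the automorphisms `α_f : x ↦ x + f` with `f` a nilpotent element of
`R[x]` belonging to `R[y]`, where `y = x·(-x+1)`. -/
theorem zmod4_center_of_automorphism_group :
    (Subgroup.center ((ZMod 4)[X] ≃ₐ[ZMod 4] (ZMod 4)[X]) :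
        Set ((ZMod 4)[X] ≃ₐ[ZMod 4] (ZMod 4)[X])) =
      {σ : (ZMod 4)[X] ≃ₐ[ZMod 4] (ZMod 4)[X] |
        ∃ f : (ZMod 4)[X], IsNilpotent f ∧
          f ∈ Algebra.adjoin (ZMod 4) ({X * (-X + 1)} : Set ((ZMod 4)[X])) ∧
          σ X = X + f} := by
  ext σ
  simp only [SetLike.mem_coe, Set.mem_setOf_eq]
  rw [Subgroup.mem_center_iff]
  constructor
  · intro hσ
    have key : ∀ (v : (ZMod 4)[X]) (e : (ZMod 4)[X] ≃ₐ[ZMod 4] (ZMod 4)[X]),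
        e X = v → (σ X).comp v = v.comp (σ X) := by
      intro v e he
      have h := hσ e
      have h2 := DFunLike.congr_fun h X
      rw [AlgEquiv.mul_apply, AlgEquiv.mul_apply] at h2
      rw [equiv_apply e (σ X), equiv_apply σ (e X), he] at h2
      exact h2
    have hτ1 : ∃ e : (ZMod 4)[X] ≃ₐ[ZMod 4] (ZMod 4)[X], e X = X + C 1 := by
      refine ⟨AlgEquiv.ofAlgHom (aeval (X + C 1)) (aeval (X - C 1))
        (Polynomial.algHom_ext (by simp)) (Polynomial.algHom_ext (by simp)), ?_⟩
      show aeval (X + C 1) X = X + C 1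
      simp
    have hμ : ∃ e : (ZMod 4)[X] ≃ₐ[ZMod 4] (ZMod 4)[X], e X = -X := by
      refine ⟨AlgEquiv.ofAlgHom (aeval (-X)) (aeval (-X))
        (Polynomial.algHom_ext (by simp)) (Polynomial.algHom_ext (by simp)), ?_⟩
      show aeval (-X) X = -X
      simp
    obtain ⟨e1, he1⟩ := hτ1
    obtain ⟨e2, he2⟩ := hμ
    have E1 : (σ X).comp (X + C 1) = σ X + C 1 := by
      have h2 := key (X + C 1) e1 he1
      rwa [add_comp, X_comp, C_comp] at h2
    have E2 : (σ X).comp (-X) = -(σ X) := by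
      have h2 := key (-X) e2 he2
      rwa [neg_comp, X_comp] at h2
    obtain ⟨b, hb⟩ := red_struct σ
    have hb0 : b = 0 := by
      have hev : (σ X).eval 0 = -((σ X).eval 0) := by
        have h2 := congrArg (fun p : (ZMod 4)[X] => p.eval 0) E2
        simpa [eval_comp] using h2
      have h2c : (((σ X).coeff 0).val : ZMod 2) = 0 :=
        (by decide : ∀ c : ZMod 4, c = -c → ((c.val : ℕ) : ZMod 2) = 0) _ (by
          rwa [coeff_zero_eq_eval_zero])
      have h3 : ((σ X).map phi4).coeff 0 = b := by rw [hb]; simp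
      rw [coeff_map, phi4_apply] at h3
      rw [← h3, h2c]
    rw [hb0, C_0, add_zero] at hb
    have hfred : (σ X - X).map phi4 = 0 := by
      rw [Polynomial.map_sub, map_X, hb, sub_self]
    obtain ⟨g, hg⟩ := dvd_two_of_map_zero hfred
    have hfinv : (σ X - X).comp (X + C 1) = σ X - X := by
      rw [sub_comp, X_comp, E1]; ring
    have hginv : (g.map phi4).comp (X + C 1) = g.map phi4 := by
      have h2 : (C 2 * g).comp (X + C 1) = C 2 * g := by rw [← hg]; exact hfinv
      rw [mul_comp, C_comp] at h2
      have h3 := (two_mul_iff _ _).mp h2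
      rw [Polynomial.map_comp] at h3
      rwa [show ((X + C 1 : (ZMod 4)[X]).map phi4) = X + C 1 by simp] at h3
    obtain ⟨q, hq⟩ := invariant_comp hginv
    obtain ⟨k, hk⟩ := Polynomial.map_surjective phi4
      (fun c => ⟨((c.val : ℕ) : ZMod 4), by
        rw [phi4_apply]
        exact (by decide : ∀ c : ZMod 2, ((((c.val : ℕ) : ZMod 4)).val : ZMod 2) = c) c⟩) q
    refine ⟨σ X - X, ⟨2, by rw [hg, sq]; exact sq_two_mul_zero g⟩, ?_, by ring⟩
    rw [Algebra.adjoin_singleton_eq_range_aeval]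
    refine ⟨C 2 * k, ?_⟩
    show aeval (X * (-X + 1)) (C 2 * k) = σ X - X
    rw [← comp_eq_aeval, mul_comp, C_comp, hg, two_mul_iff, Polynomial.map_comp, map_y, hk, hq]
  · rintro ⟨f, hnil, hadj, hsx⟩ τ
    rw [Algebra.adjoin_singleton_eq_range_aeval] at hadj
    obtain ⟨h, hh0⟩ := hadj
    have hh : h.comp (X * (-X + 1)) = f := hh0
    have hfred : f.map phi4 = 0 := by
      have h2 : IsNilpotent (f.map phi4) := by
        simpa [coe_mapRingHom] using hnil.map (mapRingHom phi4)
      exact h2.eq_zero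
    have hhred : h.map phi4 = 0 := by
      have hcomp : (h.map phi4).comp (X^2+X) = 0 := by
        rw [← map_y, ← Polynomial.map_comp, hh, hfred]
      rcases comp_eq_zero_iff.mp hcomp with h0 | ⟨-, hC⟩
      · exact h0
      · exact absurd hC (w_ne_C _)
    obtain ⟨k, hk⟩ := dvd_two_of_map_zero hhred
    have hf2 : f = C 2 * (k.comp (X * (-X + 1))) := by
      rw [← hh, hk, mul_comp, C_comp]
    have hff : f * f = 0 := by rw [hf2]; exact sq_two_mul_zero _
    apply AlgEquiv.ext
    intro p
    rw [AlgEquiv.mul_apply, AlgEquiv.mul_apply]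
    rw [equiv_apply σ p, equiv_apply τ (p.comp (σ X)), equiv_apply τ p,
      equiv_apply σ (p.comp (τ X)), comp_assoc, comp_assoc]
    congr 1
    obtain ⟨b, hb⟩ := red_struct τ
    rw [hsx, add_comp, X_comp, taylor2 hff]
    congr 1
    rw [hf2, mul_comp, C_comp]
    have hr : derivative (τ X) * (C 2 * k.comp (X * (-X + 1)))
        = C 2 * (derivative (τ X) * k.comp (X * (-X + 1))) := by ring
    rw [hr, two_mul_iff, Polynomial.map_comp, Polynomial.map_mul, Polynomial.map_comp,
      map_y, ← derivative_map, hb]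
    rw [derivative_add, derivative_X, derivative_C, add_zero, one_mul]
    rw [comp_assoc, w_comp_invariant b]
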